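/- Let 0 < λ < μ. At s = ζ⁺ the quadratic in ξ has a double root equal to √(λμ/2) - μ; that is, for every real ξ, (ζ⁺+μ)ξ² + (μ² - λμ/2 + (μ-λ)ζ⁺)ξ - λμζ⁺/2 = (ζ⁺+μ)·(ξ - (√(λμ/2) - μ))². -/

import Mathlib

noncomputable section

/-- The ramification point `ζ⁺`. -/
def zetaPlus (lam mu : ℝ) : ℝ :=
  -mu * (Real.sqrt mu - Real.sqrt (lam / 2)) ^ 2 /
    (lam / 2 + (Real.sqrt mu - Real.sqrt (lam / 2)) ^ 2)

theorem stmt_2 (lam mu : ℝ) (hlam : 0 < lam) (hmu : lam < mu) :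
    ∀ ξ : ℝ,
      (zetaPlus lam mu + mu) * ξ ^ 2 +
          (mu ^ 2 - lam * mu / 2 + (mu - lam) * zetaPlus lam mu) * ξ -
          lam * mu * zetaPlus lam mu / 2 =
        (zetaPlus lam mu + mu) * (ξ - (Real.sqrt (lam * mu / 2) - mu)) ^ 2 := by
  intro ξ
  have hmu0 : (0:ℝ) < mu := hlam.trans hmu
  unfold zetaPlus
  set a := Real.sqrt mu with ha
  set b := Real.sqrt (lam / 2) with hb
  have ha2 : a ^ 2 = mu := Real.sq_sqrt hmu0.le
  have hb2 : b ^ 2 = lam / 2 := Real.sq_sqrt (by linarith)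
  have hab : Real.sqrt (lam * mu / 2) = b * a := by
    rw [hb, ha, ← Real.sqrt_mul (by linarith : (0:ℝ) ≤ lam / 2)]
    ring_nf
  have hD : lam / 2 + (a - b) ^ 2 ≠ 0 := by nlinarith [sq_nonneg (a - b)]
  have hl : lam = 2 * b ^ 2 := by rw [hb2]; ring
  rw [hab, hl, ← ha2]
  rw [hl] at hD
  have hD2 : b ^ 2 + (a - b) ^ 2 ≠ 0 := by nlinarith [sq_nonneg (a - b)]
  field_simp
  ring
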